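/- Under Assumption that A has L_p-Lipschitz p-th derivatives and is (1/λ_k)-strongly convex (A = A_{λ_k}(·; x_g^k)), with M ≥ L_p and σ ∈ (0,1), the number of iterations T^k until the Tensor Extragradient Method terminates with ‖∇A(x^{t+1/2})‖ ≤ σ λ_k^{-1}‖x^{t+1/2} − x^{0}‖ satisfies T^k ≤ (λ_k C_p(M,σ) ‖x_g^k − x^{k,*}‖^{p−1})^{2/p} + 1, where C_p(M,σ) = p^p M^p (1+σ^{-1}) / (p! (pM − L_p)^{p/2}(pM + L_p)^{p/2−1}). -/

import Mathlib

open Finset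

local notation "⟪" x ", " y "⟫" => @inner ℝ _ _ x y

section Symm

variable {E : Type} [NormedAddCommGroup E] [NormedSpace ℝ E]

lemma lastTwoSwap {F : Type} [NormedAddCommGroup F] [NormedSpace ℝ F]
    (n : ℕ) (f : E → F) (hf : ContDiff ℝ (↑(n+2) : ℕ∞) f) (x : E)
    (m : Fin n → E) (u v : E) :
    iteratedFDeriv ℝ (n+2) f x (Fin.snoc (Fin.snoc m u) v) =
      iteratedFDeriv ℝ (n+2) f x (Fin.snoc (Fin.snoc m v) u) := by
  have h1 : ∀ (a b : E), iteratedFDeriv ℝ (n+2) f x (Fin.snoc (Fin.snoc m a) b)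
      = iteratedFDeriv ℝ n (fderiv ℝ (fderiv ℝ f)) x m a b := by
    intro a b
    rw [iteratedFDeriv_succ_apply_right]
    simp only [Fin.init_snoc, Fin.snoc_last]
    rw [iteratedFDeriv_succ_apply_right]
    simp only [Fin.init_snoc, Fin.snoc_last]
  rw [h1, h1]
  set g := fderiv ℝ (fderiv ℝ f) with hg_def
  have hf1 : ContDiff ℝ (↑(n+1) : ℕ∞) (fderiv ℝ f) := by
    apply hf.fderiv_right
    exact_mod_cast Nat.le_refl (n+2)
  have hg : ContDiff ℝ (↑n : ℕ∞) g := by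
    apply hf1.fderiv_right
    exact_mod_cast Nat.le_refl (n+1)
  have hsym : ∀ y, g y u v = g y v u := by
    intro y
    have hd1 : ∀ z, HasFDerivAt f (fderiv ℝ f z) z := fun z =>
      ((hf.differentiable (by simp)) z).hasFDerivAt
    have hd2 : HasFDerivAt (fderiv ℝ f) (g y) y :=
      ((hf1.differentiable (by simp)) y).hasFDerivAt
    exact second_derivative_symmetric hd1 hd2 u v
  set Φ : (E →L[ℝ] E →L[ℝ] F) →L[ℝ] F :=
    ((ContinuousLinearMap.apply ℝ F v).comp (ContinuousLinearMap.apply ℝ (E →L[ℝ] F) u)) -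
    ((ContinuousLinearMap.apply ℝ F u).comp (ContinuousLinearMap.apply ℝ (E →L[ℝ] F) v)) with hΦ
  have hzero : (⇑Φ ∘ g) = fun _ => (0 : F) := by
    funext y
    simp [hΦ, hsym y]
  have hcomp := Φ.iteratedFDeriv_comp_left (hg.contDiffAt (x := x)) (i := n) le_rfl
  rw [hzero] at hcomp
  rw [iteratedFDeriv_zero_fun] at hcomp
  have := congrArg (fun (c : ContinuousMultilinearMap ℝ (fun _ : Fin n => E) F) => c m) hcomp
  simp only [ContinuousMultilinearMap.zero_apply,
    ContinuousLinearMap.compContinuousMultilinearMap_coe, Function.comp_apply] at this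
  have h2 : Φ (iteratedFDeriv ℝ n g x m) = 0 := by
    rw [← this]; simp
  rw [hΦ] at h2
  simp only [ContinuousLinearMap.sub_apply, ContinuousLinearMap.comp_apply,
    ContinuousLinearMap.apply_apply] at h2
  exact sub_eq_zero.mp h2


lemma update_diag_symm : ∀ (n : ℕ) {F : Type} [NormedAddCommGroup F] [NormedSpace ℝ F]
    (f : E → F), ContDiff ℝ (↑(n+1) : ℕ∞) f → ∀ (x a v : E) (j : Fin (n+1)),
    iteratedFDeriv ℝ (n+1) f x (Function.update (fun _ => a) j v) =
      iteratedFDeriv ℝ (n+1) f x (Fin.snoc (fun _ => a) v) := by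
  intro n
  induction n with
  | zero =>
    intro F _ _ f hf x a v j
    congr 1
    funext i
    have hi : i = Fin.last 0 := Fin.fin_one_eq_zero i
    have hj : j = Fin.last 0 := Fin.fin_one_eq_zero j
    subst hi hj
    rw [Function.update_self, Fin.snoc_last]
  | succ n IH =>
    intro F _ _ f hf x a v j
    by_cases hj : j = Fin.last (n+1)
    · subst hj
      congr 1
      funext i
      induction i using Fin.lastCases with
      | last => rw [Function.update_self, Fin.snoc_last]
      | cast k =>
        rw [Function.update_of_ne (Fin.castSucc_lt_last k).ne, Fin.snoc_castSucc]
    · obtain ⟨j', rfl⟩ : ∃ j', Fin.castSucc j' = j := Fin.exists_castSucc_eq.mpr hj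
      have key : Function.update (fun _ : Fin (n+2) => a) (Fin.castSucc j') v =
          Fin.snoc (Function.update (fun _ : Fin (n+1) => a) j' v) a := by
        funext i
        induction i using Fin.lastCases with
        | last =>
          rw [Function.update_of_ne (Fin.castSucc_lt_last j').ne', Fin.snoc_last]
        | cast k =>
          rw [Fin.snoc_castSucc]
          by_cases hk : k = j'
          · subst hk; rw [Function.update_self, Function.update_self]
          · rw [Function.update_of_ne (fun h => hk (Fin.castSucc_injective _ h)),
              Function.update_of_ne hk]
      rw [key]
      have hf1 : ContDiff ℝ (↑(n+1) : ℕ∞) (fderiv ℝ f) := by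
        apply hf.fderiv_right
        exact_mod_cast Nat.le_refl (n+2)
      have e1 := iteratedFDeriv_succ_apply_right (𝕜 := ℝ) (n := n+1) (f := f) (x := x)
        (Fin.snoc (Function.update (fun _ : Fin (n+1) => a) j' v) a)
      rw [Fin.init_snoc, Fin.snoc_last] at e1
      rw [e1, IH (fderiv ℝ f) hf1 x a v j']
      have e2 := iteratedFDeriv_succ_apply_right (𝕜 := ℝ) (n := n+1) (f := f) (x := x)
        (Fin.snoc (Fin.snoc (fun _ : Fin n => a) v) a)
      rw [Fin.init_snoc, Fin.snoc_last] at e2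
      rw [← e2, lastTwoSwap n f hf x _ v a]
      have e3 : Fin.snoc (fun _ : Fin n => a) a = (fun _ : Fin (n+1) => a) := by
        funext i
        induction i using Fin.lastCases with
        | last => rw [Fin.snoc_last]
        | cast k => rw [Fin.snoc_castSucc]
      rw [e3]


lemma hasFDerivAt_iteratedFDeriv_diag {F : Type} [NormedAddCommGroup F] [NormedSpace ℝ F]
    (n : ℕ) (f : E → F) (hf : ContDiff ℝ (↑(n+1) : ℕ∞) f) (x w : E) :
    HasFDerivAt (fun y => iteratedFDeriv ℝ (n+1) f x (fun _ => y - x))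
      ((((n : ℝ)+1)) • (iteratedFDeriv ℝ n (fderiv ℝ f) x (fun _ => w - x))) w := by
  classical
  set c := iteratedFDeriv ℝ (n+1) f x with hc_def
  set Λ : E →L[ℝ] (Fin (n+1) → E) :=
    ContinuousLinearMap.pi (fun _ : Fin (n+1) => ContinuousLinearMap.id ℝ E) with hΛ
  have hℓ : HasFDerivAt (fun y : E => (fun _ : Fin (n+1) => y - x)) Λ w := by
    apply hasFDerivAt_pi''
    intro i
    exact (hasFDerivAt_id w).sub_const x
  have hc := (c.hasFDerivAt (fun _ : Fin (n+1) => w - x)).comp w hℓ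
  have heq : ((c.linearDeriv fun _ => w - x).comp Λ) =
      ((((n : ℝ)+1)) • (iteratedFDeriv ℝ n (fderiv ℝ f) x (fun _ => w - x))) := by
    ext v
    rw [ContinuousLinearMap.comp_apply, ContinuousMultilinearMap.linearDeriv_apply]
    have hterm : ∀ j : Fin (n+1), c (Function.update (fun _ => w - x) j (Λ v j)) =
        iteratedFDeriv ℝ n (fderiv ℝ f) x (fun _ => w - x) v := by
      intro j
      have h1 : Λ v j = v := rfl
      rw [h1, hc_def, update_diag_symm n f hf x (w - x) v j,
        iteratedFDeriv_succ_apply_right]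
      rw [Fin.init_snoc, Fin.snoc_last]
    rw [Finset.sum_congr rfl (fun j _ => hterm j), Finset.sum_const, Finset.card_univ,
      Fintype.card_fin]
    rw [ContinuousLinearMap.smul_apply]
    rw [← Nat.cast_smul_eq_nsmul ℝ]
    norm_num
  rw [heq] at hc
  exact hc


lemma taylor_remainder : ∀ (n : ℕ) {F : Type} [NormedAddCommGroup F] [NormedSpace ℝ F]
    (f : E → F), ContDiff ℝ (↑n : ℕ∞) f → ∀ (K : ℝ),
    (∀ z y : E, ‖iteratedFDeriv ℝ n f z - iteratedFDeriv ℝ n f y‖ ≤ K * ‖z - y‖) →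
    ∀ (x y : E),
    ‖f y - ∑ i ∈ Finset.range (n+1),
        ((Nat.factorial i : ℝ))⁻¹ • iteratedFDeriv ℝ i f x (fun _ => y - x)‖
      ≤ K / (Nat.factorial (n+1) : ℝ) * ‖y - x‖^(n+1) := by
  intro n
  induction n with
  | zero =>
    intro F _ _ f hf K hLip x y
    have h0 : ∀ z : E, iteratedFDeriv ℝ 0 f z =
        (continuousMultilinearCurryFin0 ℝ E F).symm (f z) := by
      intro z; ext m; simp
    have hL : ‖f y - f x‖ ≤ K * ‖y - x‖ := by
      have := hLip y x
      rw [h0 y, h0 x, ← LinearIsometryEquiv.map_sub, LinearIsometryEquiv.norm_map] at this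
      exact this
    simpa [Finset.sum_range_one] using hL
  | succ n IH =>
    intro F _ _ f hf K hLip x y
    set u := y - x with hu
    -- the scalar path function
    set S : ℝ → F := fun t => ∑ i ∈ Finset.range (n+2),
      (t^i * ((Nat.factorial i : ℝ))⁻¹) • iteratedFDeriv ℝ i f x (fun _ => u) with hS
    set g : ℝ → F := fun t => f (x + t • u) - S t with hg
    have hfd : Differentiable ℝ f := hf.differentiable (by simp)
    have hfd1 : ContDiff ℝ (↑n : ℕ∞) (fderiv ℝ f) :=
      hf.fderiv_right (by exact_mod_cast Nat.le_refl (n+1))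
    -- derivative of g
    set Φ : ℝ → (E →L[ℝ] F) := fun t => fderiv ℝ f (x + t • u) -
      ∑ i ∈ Finset.range (n+1),
        (t^i * ((Nat.factorial i : ℝ))⁻¹) • iteratedFDeriv ℝ i (fderiv ℝ f) x (fun _ => u) with hΦ
    have hgd : ∀ t : ℝ, HasDerivAt g (Φ t u) t := by
      intro t
      have hline : HasDerivAt (fun t : ℝ => x + t • u) u t := by
        simpa using ((hasDerivAt_id t).smul_const u).const_add x
      have h1 : HasDerivAt (fun t : ℝ => f (x + t • u)) (fderiv ℝ f (x + t • u) u) t :=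
        (hfd (x + t • u)).hasFDerivAt.comp_hasDerivAt t hline
      have h2 : HasDerivAt S (∑ i ∈ Finset.range (n+2),
          (((i : ℝ) * t^(i-1)) * ((Nat.factorial i : ℝ))⁻¹) •
            iteratedFDeriv ℝ i f x (fun _ => u)) t := by
        apply HasDerivAt.fun_sum
        intro i _
        exact ((hasDerivAt_pow i t).mul_const ((Nat.factorial i : ℝ))⁻¹).smul_const _
      have hsum : (∑ i ∈ Finset.range (n+2),
          (((i : ℝ) * t^(i-1)) * ((Nat.factorial i : ℝ))⁻¹) •
            iteratedFDeriv ℝ i f x (fun _ => u)) =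
          ∑ i ∈ Finset.range (n+1),
            (t^i * ((Nat.factorial i : ℝ))⁻¹) •
              iteratedFDeriv ℝ i (fderiv ℝ f) x (fun _ => u) u := by
        rw [Finset.sum_range_succ']
        simp only [Nat.cast_zero, zero_mul, zero_smul, add_zero]
        apply Finset.sum_congr rfl
        intro i _
        have hfact : ((i+1 : ℕ) : ℝ) * t^(i+1-1) * ((Nat.factorial (i+1) : ℝ))⁻¹ =
            t^i * ((Nat.factorial i : ℝ))⁻¹ := by
          rw [Nat.factorial_succ]
          push_cast
          field_simp
        rw [hfact]
        congr 1
        have := iteratedFDeriv_succ_apply_right (𝕜 := ℝ) (n := i) (f := f) (x := x)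
          (Fin.snoc (fun _ : Fin i => u) u)
        rw [Fin.init_snoc, Fin.snoc_last] at this
        rw [← this]
        congr 1
        funext k
        induction k using Fin.lastCases with
        | last => rw [Fin.snoc_last]
        | cast k => rw [Fin.snoc_castSucc]
      have := h1.sub (hsum ▸ h2)
      have hΦu : Φ t u = fderiv ℝ f (x + t • u) u - ∑ i ∈ Finset.range (n+1),
          (t^i * ((Nat.factorial i : ℝ))⁻¹) •
            iteratedFDeriv ℝ i (fderiv ℝ f) x (fun _ => u) u := by
        simp [hΦ, ContinuousLinearMap.sub_apply, ContinuousLinearMap.sum_apply]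
      rw [hg]
      rw [hΦu]
      exact this
    -- bound on Φ t
    have hΦbound : ∀ t : ℝ, t ∈ Set.Icc (0:ℝ) 1 → ‖Φ t‖ ≤
        K / (Nat.factorial (n+1) : ℝ) * (t^(n+1) * ‖u‖^(n+1)) := by
      intro t ht
      have hLip' : ∀ z y : E, ‖iteratedFDeriv ℝ n (fderiv ℝ f) z -
          iteratedFDeriv ℝ n (fderiv ℝ f) y‖ ≤ K * ‖z - y‖ := by
        intro z w
        have h1 : ∀ z : E, iteratedFDeriv ℝ (n+1) f z =
            (continuousMultilinearCurryRightEquiv' ℝ n E F).symm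
              (iteratedFDeriv ℝ n (fderiv ℝ f) z) := by
          intro z
          rw [iteratedFDeriv_succ_eq_comp_right]
          rfl
        have := hLip z w
        rw [h1 z, h1 w, ← LinearIsometryEquiv.map_sub, LinearIsometryEquiv.norm_map] at this
        exact this
      have hIH := IH (fderiv ℝ f) hfd1 K hLip' x (x + t • u)
      have hz : (x + t • u) - x = t • u := by abel
      rw [hz] at hIH
      have hterm : ∀ i : ℕ, ((Nat.factorial i : ℝ))⁻¹ •
          iteratedFDeriv ℝ i (fderiv ℝ f) x (fun _ => t • u) =
          (t^i * ((Nat.factorial i : ℝ))⁻¹) •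
            iteratedFDeriv ℝ i (fderiv ℝ f) x (fun _ => u) := by
        intro i
        rw [ContinuousMultilinearMap.map_smul_univ, smul_smul]
        congr 1
        rw [Finset.prod_const, Finset.card_univ, Fintype.card_fin]
        ring
      simp only [hterm] at hIH
      rw [hΦ]
      calc ‖fderiv ℝ f (x + t • u) - ∑ i ∈ Finset.range (n+1),
            (t^i * ((Nat.factorial i : ℝ))⁻¹) • iteratedFDeriv ℝ i (fderiv ℝ f) x (fun _ => u)‖
          ≤ K / (Nat.factorial (n+1) : ℝ) * ‖t • u‖^(n+1) := hIH
        _ ≤ K / (Nat.factorial (n+1) : ℝ) * (t^(n+1) * ‖u‖^(n+1)) := by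
            rw [norm_smul, mul_pow, Real.norm_eq_abs, abs_of_nonneg ht.1]
    -- fencing
    set C : ℝ := K / (Nat.factorial (n+2) : ℝ) * ‖u‖^(n+2) with hC
    have hfence : ‖g 1‖ ≤ C * 1^(n+2) := by
      refine image_norm_le_of_norm_deriv_right_le_deriv_boundary
        (f := g) (f' := fun t => Φ t u) (B := fun t => C * t^(n+2))
        (B' := fun t => C * ((n+2 : ℕ) * t^(n+1)))
        (a := 0) (b := 1)
        (fun t _ => (hgd t).continuousAt.continuousWithinAt)
        (fun t _ => (hgd t).hasDerivWithinAt)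
        ?_ (fun t => by simpa using (hasDerivAt_pow (n+2) t).const_mul C) ?_
        (Set.right_mem_Icc.mpr zero_le_one)
      · have : g 0 = 0 := by
          simp [hg, hS, Finset.sum_range_succ']
        rw [this]; simp
      · intro t ht
        have h1 : ‖Φ t u‖ ≤ ‖Φ t‖ * ‖u‖ := (Φ t).le_opNorm u
        have h2 := hΦbound t ⟨ht.1, le_of_lt ht.2⟩
        have h3 : K / (Nat.factorial (n+1) : ℝ) * (t^(n+1) * ‖u‖^(n+1)) * ‖u‖ =
            C * ((n+2 : ℕ) * t^(n+1)) := by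
          rw [hC]
          have : (Nat.factorial (n+2) : ℝ) = (n+2 : ℕ) * (Nat.factorial (n+1) : ℝ) := by
            rw [Nat.factorial_succ]; push_cast; ring
          rw [this]
          have hne : ((Nat.factorial (n+1) : ℝ)) ≠ 0 := by
            exact_mod_cast Nat.factorial_ne_zero (n+1)
          field_simp
          ring
        calc ‖Φ t u‖ ≤ ‖Φ t‖ * ‖u‖ := h1
          _ ≤ K / (Nat.factorial (n+1) : ℝ) * (t^(n+1) * ‖u‖^(n+1)) * ‖u‖ := by
              apply mul_le_mul_of_nonneg_right h2 (norm_nonneg u)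
          _ = C * ((n+2 : ℕ) * t^(n+1)) := h3
    have hg1 : g 1 = f y - ∑ i ∈ Finset.range (n+2),
        ((Nat.factorial i : ℝ))⁻¹ • iteratedFDeriv ℝ i f x (fun _ => y - x) := by
      simp [hg, hS, hu]
    rw [hg1] at hfence
    simpa [hC] using hfence


end Symm

section Hilbert

variable {H : Type} [NormedAddCommGroup H] [InnerProductSpace ℝ H]

lemma hasFDerivAt_norm_pow_sub (q : ℕ) (hq : 2 ≤ q) (x w : H) :
    HasFDerivAt (fun y : H => ‖y - x‖ ^ q)
      (((q : ℝ) * ‖w - x‖ ^ (q - 2)) • (innerSL ℝ (w - x))) w := by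
  by_cases hw : w = x
  · subst hw
    have h0 : ((q : ℝ) * ‖w - w‖ ^ (q - 2)) • (innerSL ℝ (w - w)) = 0 := by
      simp
    rw [h0]
    rw [hasFDerivAt_iff_isLittleO_nhds_zero]
    have hbound : ∀ h : H, ‖‖w + h - w‖ ^ q - ‖w - w‖ ^ q - (0 : H →L[ℝ] ℝ) h‖
        = ‖h‖ ^ q := by
      intro h
      simp [zero_pow (by omega : q ≠ 0), abs_of_nonneg (pow_nonneg (norm_nonneg _) q)]
    rw [Asymptotics.isLittleO_iff]
    intro c hc
    have : ∀ᶠ h : H in nhds 0, ‖h‖ ^ (q-1) ≤ c := by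
      have hcont : ContinuousAt (fun h : H => ‖h‖ ^ (q-1)) 0 :=
        (continuous_norm.pow (q-1)).continuousAt
      have h0 : (fun h : H => ‖h‖ ^ (q-1)) 0 = 0 := by
        simp [Nat.sub_ne_zero_of_lt (by omega : 1 < q)]
      have := hcont.eventually_le_const (by rw [h0]; exact hc)
      exact this
    filter_upwards [this] with h hh
    rw [hbound]
    calc ‖h‖ ^ q = ‖h‖ ^ (q-1) * ‖h‖ := by
          rw [← pow_succ]; congr 1; omega
      _ ≤ c * ‖h‖ := by
          apply mul_le_mul_of_nonneg_right hh (norm_nonneg h)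
      _ = c * ‖h‖ := rfl
  · have hwx : w - x ≠ 0 := sub_ne_zero_of_ne hw
    have hnorm : (0:ℝ) < ‖w - x‖ := norm_pos_iff.mpr hwx
    -- derivative of y ↦ ‖y - x‖²
    have h1 : HasFDerivAt (fun y : H => ‖y - x‖ ^ 2)
        (2 • (innerSL ℝ (w - x))) w := by
      have hid : HasFDerivAt (fun y : H => y - x) (ContinuousLinearMap.id ℝ H) w :=
        (hasFDerivAt_id w).sub_const x
      have h2 := hid.norm_sq
      simpa using h2
    -- G s = (sqrt s)^q
    have h2 : HasDerivAt (fun s : ℝ => (Real.sqrt s) ^ q)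
        ((q : ℝ) * ‖w - x‖ ^ (q-1) * (1 / (2 * ‖w - x‖))) (‖w - x‖ ^ 2) := by
      have hs : (‖w - x‖ ^ 2 : ℝ) ≠ 0 := by positivity
      have hsq := Real.hasDerivAt_sqrt hs
      have hpow := HasDerivAt.pow hsq q
      have hval : Real.sqrt (‖w - x‖ ^ 2) = ‖w - x‖ := Real.sqrt_sq (norm_nonneg _)
      rw [hval] at hpow
      exact hpow
    have h3 := h2.comp_hasFDerivAt w h1
    have heq : (fun y : H => (Real.sqrt (‖y - x‖ ^ 2)) ^ q) = fun y : H => ‖y - x‖ ^ q := by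
      funext y
      rw [Real.sqrt_sq (norm_nonneg _)]
    rw [Function.comp_def] at h3
    rw [heq] at h3
    have hd : ((q:ℝ) * ‖w - x‖ ^ (q - 1) * (1 / (2 * ‖w - x‖))) • (2 • (innerSL ℝ (w - x)))
        = ((q : ℝ) * ‖w - x‖ ^ (q - 2)) • (innerSL ℝ (w - x)) := by
      have hq1 : ‖w - x‖ ^ (q-1) = ‖w - x‖ ^ (q-2) * ‖w - x‖ := by
        rw [← pow_succ]; congr 1; omega
      ext v
      simp only [ContinuousLinearMap.smul_apply, two_smul, ContinuousLinearMap.add_apply,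
        smul_eq_mul]
      rw [hq1]
      field_simp
      ring
    rw [hd] at h3
    exact h3


lemma strongConvexOn_lower_bound {m : ℝ} {f : H → ℝ} (hf : StrongConvexOn Set.univ m f)
    (hdiff : ∀ z : H, HasFDerivAt f (fderiv ℝ f z) z) (z y : H) :
    f z + fderiv ℝ f z (y - z) + m / 2 * ‖y - z‖ ^ 2 ≤ f y := by
  by_cases hyz : y = z
  · subst hyz; simp
  -- slope inequality
  set φ : ℝ → ℝ := fun t => f (z + t • (y - z)) with hφ
  have hslope : ∀ t : ℝ, t ∈ Set.Ioo (0:ℝ) 1 →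
      (φ t - φ 0) / t ≤ (f y - f z) - (1 - t) * (m / 2 * ‖y - z‖ ^ 2) := by
    intro t ht
    have hcvx := hf.2 (Set.mem_univ y) (Set.mem_univ z) (le_of_lt ht.1)
      (by linarith [ht.2] : (0:ℝ) ≤ 1 - t) (by ring)
    have hpt : t • y + (1 - t) • z = z + t • (y - z) := by
      rw [smul_sub, sub_smul, one_smul]; abel
    rw [hpt] at hcvx
    simp only [smul_eq_mul] at hcvx
    have hφ0 : φ 0 = f z := by simp [hφ]
    have hφt : φ t ≤ t * f y + (1 - t) * f z - t * (1 - t) * (m / 2 * ‖y - z‖ ^ 2) := by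
      have hnormyz : ‖y - z‖ = ‖y - z‖ := rfl
      calc φ t = f (z + t • (y - z)) := rfl
        _ ≤ t * f y + (1 - t) * f z - t * (1 - t) * (m / 2 * ‖y - z‖ ^ 2) := hcvx
    rw [div_le_iff₀ ht.1, hφ0]
    nlinarith [ht.1]
  have hder : HasDerivAt φ (fderiv ℝ f z (y - z)) 0 := by
    have hline : HasDerivAt (fun t : ℝ => z + t • (y - z)) (y - z) 0 := by
      simpa using ((hasDerivAt_id (0:ℝ)).smul_const (y - z)).const_add z
    have := (hdiff (z + (0:ℝ) • (y - z))).comp_hasDerivAt 0 hline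
    simpa [hφ, Function.comp_def] using this
  have htend : Filter.Tendsto (fun t => (φ t - φ 0) / t) (nhdsWithin 0 (Set.Ioi 0))
      (nhds (fderiv ℝ f z (y - z))) := by
    have h1 := hder.tendsto_slope_zero_right
    simpa [div_eq_inv_mul] using h1
  have htend2 : Filter.Tendsto (fun t : ℝ => (f y - f z) - (1 - t) * (m / 2 * ‖y - z‖ ^ 2))
      (nhdsWithin 0 (Set.Ioi 0)) (nhds ((f y - f z) - m / 2 * ‖y - z‖ ^ 2)) := by
    have hc : Continuous (fun t : ℝ => (f y - f z) - (1 - t) * (m / 2 * ‖y - z‖ ^ 2)) := by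
      continuity
    have h := (hc.tendsto 0).mono_left (nhdsWithin_le_nhds (s := Set.Ioi (0:ℝ)))
    simpa using h
  have hle : fderiv ℝ f z (y - z) ≤ (f y - f z) - m / 2 * ‖y - z‖ ^ 2 := by
    apply le_of_tendsto_of_tendsto htend htend2
    rw [Filter.EventuallyLE]
    filter_upwards [Ioo_mem_nhdsGT_of_mem (Set.mem_Ico.mpr ⟨le_refl (0:ℝ), one_pos⟩)] with t ht
    exact hslope t ht
  linarith

lemma ms_descent {xx xplus u w g : H} {η : ℝ} (hη : 0 ≤ η)
    (hxp : xplus = xx - η • g) (hg : 0 ≤ ⟪g, w - u⟫) :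
    ‖xplus - u‖ ^ 2 ≤ ‖xx - u‖ ^ 2 - ‖w - xx‖ ^ 2 + ‖w - xplus‖ ^ 2 := by
  subst hxp
  have e1 : xx - η • g - u = (xx - u) - η • g := by abel
  have e2 : w - (xx - η • g) = (w - xx) + η • g := by abel
  rw [e1, e2]
  rw [norm_sub_sq_real, norm_add_sq_real]
  have e3 : ⟪w - xx, η • g⟫ + ⟪xx - u, η • g⟫ = η * ⟪g, w - u⟫ := by
    rw [← inner_add_left]
    have : (w - xx) + (xx - u) = w - u := by abel
    rw [this, real_inner_smul_right, real_inner_comm]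
  nlinarith [mul_nonneg hη hg]


end Hilbert

lemma pow_rpow_cancel (c : ℝ) (hc : 0 ≤ c) (k : ℕ) (hk : k ≠ 0) :
    (c ^ k) ^ ((2:ℝ)/(k:ℝ)) = c ^ 2 := by
  rw [← Real.rpow_natCast c k, ← Real.rpow_mul hc]
  have hkk : (k:ℝ) * (2/(k:ℝ)) = 2 := by
    have : (k:ℝ) ≠ 0 := Nat.cast_ne_zero.mpr hk
    field_simp
  rw [hkk, show (2:ℝ) = ((2:ℕ):ℝ) by norm_num, Real.rpow_natCast]

/-- The `p`-th order Taylor polynomial of `A` at `z`, evaluated at `x`. -/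
noncomputable def taylorApprox {d : ℕ} (p : ℕ) (A : EuclideanSpace ℝ (Fin d) → ℝ)
    (z x : EuclideanSpace ℝ (Fin d)) : ℝ :=
  ∑ i ∈ Finset.range (p + 1),
    (1 / (Nat.factorial i : ℝ)) * iteratedFDeriv ℝ i A z (fun _ => x - z)

lemma hasFDerivAt_taylorApprox {d : ℕ} (p : ℕ) (A : EuclideanSpace ℝ (Fin d) → ℝ)
    (hA : ContDiff ℝ (↑p : ℕ∞) A) (z w : EuclideanSpace ℝ (Fin d)) :
    HasFDerivAt (fun y => taylorApprox p A z y)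
      (∑ i ∈ Finset.range p, ((Nat.factorial i : ℝ))⁻¹ •
        iteratedFDeriv ℝ i (fderiv ℝ A) z (fun _ => w - z)) w := by
  classical
  set D : ℕ → (EuclideanSpace ℝ (Fin d) →L[ℝ] ℝ) := fun i =>
    Nat.rec 0 (fun j _ => ((1 / ((Nat.factorial (j+1) : ℝ))) * ((j:ℝ)+1)) •
      iteratedFDeriv ℝ j (fderiv ℝ A) z (fun _ => w - z)) i with hD
  have hterm : ∀ i ∈ Finset.range (p+1),
      HasFDerivAt (fun y => (1 / (Nat.factorial i : ℝ)) *
        iteratedFDeriv ℝ i A z (fun _ => y - z)) (D i) w := by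
    intro i hi
    match i with
    | 0 =>
      have hconst : (fun y => (1 / (Nat.factorial 0 : ℝ)) *
          iteratedFDeriv ℝ 0 A z (fun _ => y - z)) = fun _ => (1 / (Nat.factorial 0 : ℝ)) * A z := by
        funext y
        rw [iteratedFDeriv_zero_apply]
      rw [hconst]
      exact hasFDerivAt_const _ _
    | (j+1) =>
      have hsm : ContDiff ℝ (↑(j+1) : ℕ∞) A := hA.of_le (by
        have : j + 1 ≤ p := by
          have := Finset.mem_range.mp hi; omega
        exact_mod_cast this)
      have hdiag := hasFDerivAt_iteratedFDeriv_diag j A hsm z w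
      have := hdiag.const_mul (1 / (Nat.factorial (j+1) : ℝ))
      have heq : (1 / (Nat.factorial (j+1) : ℝ)) • ((((j : ℝ)+1)) •
          (iteratedFDeriv ℝ j (fderiv ℝ A) z (fun _ => w - z))) = D (j+1) := by
        rw [smul_smul]
      rw [heq] at this
      exact this
  have hsum := HasFDerivAt.fun_sum hterm
  have hgoal : (∑ i ∈ Finset.range (p+1), D i) = ∑ i ∈ Finset.range p,
      ((Nat.factorial i : ℝ))⁻¹ • iteratedFDeriv ℝ i (fderiv ℝ A) z (fun _ => w - z) := by
    rw [Finset.sum_range_succ']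
    have hD0 : D 0 = 0 := rfl
    rw [hD0, add_zero]
    apply Finset.sum_congr rfl
    intro j _
    have hDj : D (j+1) = ((1 / ((Nat.factorial (j+1) : ℝ))) * ((j:ℝ)+1)) •
        iteratedFDeriv ℝ j (fderiv ℝ A) z (fun _ => w - z) := rfl
    rw [hDj]
    congr 1
    rw [Nat.factorial_succ]
    push_cast
    have hne : (Nat.factorial j : ℝ) ≠ 0 := by exact_mod_cast Nat.factorial_ne_zero j
    field_simp
  rw [hgoal] at hsum
  exact hsum

set_option maxHeartbeats 1000000 in
theorem tensor_extragradient_iteration_bound {d : ℕ} (p : ℕ) (hp : 2 ≤ p)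
    (A : EuclideanSpace ℝ (Fin d) → ℝ)
    (hA : ContDiff ℝ (p : ℕ∞) A)
    (lam : ℝ) (hlam : 0 < lam)
    (hsc : StrongConvexOn Set.univ (1 / lam) A)
    (L M : ℝ) (hL : 0 < L)
    (hLip : ∀ x y : EuclideanSpace ℝ (Fin d),
      ‖iteratedFDeriv ℝ p A x - iteratedFDeriv ℝ p A y‖ ≤ L * ‖x - y‖)
    (hM : L ≤ M) (σ : ℝ) (hσ : σ ∈ Set.Ioo (0 : ℝ) 1)
    (xs : EuclideanSpace ℝ (Fin d)) (hmin : IsMinOn A Set.univ xs)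
    (x xhalf : ℕ → EuclideanSpace ℝ (Fin d))
    (hhalf : ∀ t, IsMinOn (fun y => taylorApprox p A (x t) y +
      ((p : ℝ) * M / (Nat.factorial (p + 1) : ℝ)) * ‖y - x t‖ ^ (p + 1)) Set.univ (xhalf t))
    (hstep : ∀ t, x (t + 1) = x t -
      (((M / (Nat.factorial (p - 1) : ℝ)) * ‖xhalf t - x t‖ ^ (p - 1))⁻¹) •
        gradient A (xhalf t))
    (Tk : ℕ) (hTk1 : 1 ≤ Tk)
    -- the stopping condition fails at every iteration before the last one
    (hnotstop : ∀ t, t + 1 < Tk →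
      ¬ (‖gradient A (xhalf t)‖ ≤ σ * lam⁻¹ * ‖xhalf t - x 0‖))
    (Cp : ℝ)
    (hCp : Cp = (p : ℝ) ^ p * M ^ p * (1 + σ⁻¹) /
      ((Nat.factorial p : ℝ) * ((p : ℝ) * M - L) ^ ((p : ℝ) / 2) *
        ((p : ℝ) * M + L) ^ ((p : ℝ) / 2 - 1))) :
    (Tk : ℝ) ≤ (lam * Cp * ‖x 0 - xs‖ ^ (p - 1)) ^ ((2 : ℝ) / (p : ℝ)) + 1 := by
  obtain ⟨q, rfl⟩ : ∃ q, p = q + 2 := ⟨p - 2, by omega⟩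
  have hσ0 : 0 < σ := hσ.1
  have hσ1 : σ < 1 := hσ.2
  have hM0 : 0 < M := lt_of_lt_of_le hL hM
  set pR : ℝ := ((q+2 : ℕ) : ℝ) with hpR
  have hpR2 : (2:ℝ) ≤ pR := by rw [hpR]; exact_mod_cast (by omega : 2 ≤ q + 2)
  have hpR0 : 0 < pR := by linarith
  set Kf : ℝ := (Nat.factorial (q+2) : ℝ) with hKf
  have hKf0 : (0:ℝ) < Kf := by rw [hKf]; exact_mod_cast Nat.factorial_pos _
  have hpM : (0:ℝ) < pR * M := by positivity
  have ha : (0:ℝ) < pR * M + L := by positivity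
  have hb : (0:ℝ) < pR * M - L := by nlinarith
  -- differentiability facts
  have hAd : Differentiable ℝ A := hA.differentiable (by simp)
  have hAdf : ∀ z, HasFDerivAt A (fderiv ℝ A z) z := fun z => (hAd z).hasFDerivAt
  have hfd1 : ContDiff ℝ (↑(q+1) : ℕ∞) (fderiv ℝ A) :=
    hA.fderiv_right (by exact_mod_cast le_refl (q+2))
  have hLip' : ∀ z w : EuclideanSpace ℝ (Fin d),
      ‖iteratedFDeriv ℝ (q+1) (fderiv ℝ A) z - iteratedFDeriv ℝ (q+1) (fderiv ℝ A) w‖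
        ≤ L * ‖z - w‖ := by
    intro z w
    have h1 : ∀ u, iteratedFDeriv ℝ (q+2) A u =
        (continuousMultilinearCurryRightEquiv' ℝ (q+1) (EuclideanSpace ℝ (Fin d)) ℝ).symm
          (iteratedFDeriv ℝ (q+1) (fderiv ℝ A) u) := by
      intro u; rw [iteratedFDeriv_succ_eq_comp_right]; rfl
    have h2 := hLip z w
    rw [h1 z, h1 w, ← LinearIsometryEquiv.map_sub, LinearIsometryEquiv.norm_map] at h2
    exact h2
  -- gradient/dual facts
  have htd : ∀ v : EuclideanSpace ℝ (Fin d),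
      (InnerProductSpace.toDual ℝ (EuclideanSpace ℝ (Fin d))).symm (innerSL ℝ v) = v := by
    intro v
    apply (InnerProductSpace.toDual ℝ (EuclideanSpace ℝ (Fin d))).injective
    rw [LinearIsometryEquiv.apply_symm_apply]
    ext y
    simp [InnerProductSpace.toDual_apply_apply]
  have hgradfd : ∀ w, gradient A w =
      (InnerProductSpace.toDual ℝ (EuclideanSpace ℝ (Fin d))).symm (fderiv ℝ A w) :=
    fun w => rfl
  have hgnorm : ∀ w, ‖gradient A w‖ = ‖fderiv ℝ A w‖ := by
    intro w; rw [hgradfd]; exact LinearIsometryEquiv.norm_map _ _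
  have hginner : ∀ w v, fderiv ℝ A w v = ⟪gradient A w, v⟫ := by
    intro w v
    rw [hgradfd, ← InnerProductSpace.toDual_apply_apply, LinearIsometryEquiv.apply_symm_apply]
  -- abbreviations
  set r : ℕ → ℝ := fun t => ‖xhalf t - x t‖ with hrdef
  set g : ℕ → EuclideanSpace ℝ (Fin d) := fun t => gradient A (xhalf t) with hgdef
  set c1 : ℕ → ℝ := fun t => pR * M / Kf * r t ^ (q+1) with hc1def
  have hrnn : ∀ t, 0 ≤ r t := fun t => norm_nonneg _
  -- KEY FACT: approximate optimality condition
  have key : ∀ t, ‖g t - c1 t • (x t - xhalf t)‖ ≤ L / Kf * r t ^ (q+2) := by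
    intro t
    have hTd := hasFDerivAt_taylorApprox (q+2) A hA (x t) (xhalf t)
    have hRd0 := hasFDerivAt_norm_pow_sub (q+3) (by omega) (x t) (xhalf t)
    have hRd := hRd0.const_mul (pR * M / (Nat.factorial (q+3) : ℝ))
    have hq31 : q + 3 - 2 = q + 1 := by omega
    rw [hq31] at hRd
    have hlm : IsLocalMin (fun y => taylorApprox (q+2) A (x t) y +
        (pR * M / (Nat.factorial (q+2+1) : ℝ)) * ‖y - x t‖ ^ (q+2+1)) (xhalf t) :=
      Filter.Eventually.of_forall (fun y => isMinOn_iff.mp (hhalf t) y (Set.mem_univ y))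
    have h23 : q + 2 + 1 = q + 3 := by omega
    rw [h23] at hlm
    have hmodel := hTd.add hRd
    have hzero := hlm.hasFDerivAt_eq_zero hmodel
    -- so the Taylor-gradient polynomial equals minus the regularizer gradient
    set TD := ∑ i ∈ Finset.range (q+2), ((Nat.factorial i : ℝ))⁻¹ •
      iteratedFDeriv ℝ i (fderiv ℝ A) (x t) (fun _ => xhalf t - x t) with hTDdef
    set RD := (pR * M / (Nat.factorial (q+3) : ℝ)) •
      (((q+3 : ℕ) : ℝ) * ‖xhalf t - x t‖ ^ (q+1)) • (innerSL ℝ (xhalf t - x t)) with hRDdef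
    have hTDRD : TD = -RD := by
      have := hzero
      rw [eq_neg_iff_add_eq_zero]
      exact this
    -- Taylor remainder bound
    have hT := taylor_remainder (q+1) (fderiv ℝ A) hfd1 L hLip' (x t) (xhalf t)
    have hTb : ‖fderiv ℝ A (xhalf t) - TD‖ ≤ L / Kf * r t ^ (q+2) := hT
    rw [hTDRD, sub_neg_eq_add] at hTb
    -- translate to gradient form
    have hRDval : (InnerProductSpace.toDual ℝ (EuclideanSpace ℝ (Fin d))).symm RD =
        c1 t • (xhalf t - x t) := by
      rw [hRDdef, map_smul, map_smul, htd, smul_smul]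
      congr 1
      rw [hc1def]
      have hfs : (Nat.factorial (q+3) : ℝ) = ((q+3 : ℕ) : ℝ) * Kf := by
        rw [hKf]
        exact_mod_cast congrArg (Nat.cast (R := ℝ)) (Nat.factorial_succ (q+2))
      rw [hfs]
      have h3 : ((q+3 : ℕ) : ℝ) ≠ 0 := by positivity
      field_simp
      ring
    have hlhs : g t - c1 t • (x t - xhalf t) =
        (InnerProductSpace.toDual ℝ (EuclideanSpace ℝ (Fin d))).symm
          (fderiv ℝ A (xhalf t) + RD) := by
      rw [map_add, hRDval, hgdef]
      simp only
      rw [hgradfd]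
      module
    rw [hlhs, LinearIsometryEquiv.norm_map]
    exact hTb
  -- upper bound on gradient norm
  have gub : ∀ t, ‖g t‖ ≤ (pR * M + L) / Kf * r t ^ (q+2) := by
    intro t
    have h1 := key t
    have h2 : ‖g t‖ ≤ ‖g t - c1 t • (x t - xhalf t)‖ + ‖c1 t • (x t - xhalf t)‖ := by
      have := norm_add_le (g t - c1 t • (x t - xhalf t)) (c1 t • (x t - xhalf t))
      simpa using this
    have h3 : ‖c1 t • (x t - xhalf t)‖ = c1 t * r t := by
      rw [norm_smul, Real.norm_eq_abs, abs_of_nonneg (by positivity), hrdef]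
      simp only
      rw [norm_sub_rev]
    have h4 : c1 t * r t = pR * M / Kf * r t ^ (q+2) := by
      rw [hc1def]
      simp only
      rw [pow_succ]
      ring
    rw [h3, h4] at h2
    calc ‖g t‖ ≤ ‖g t - c1 t • (x t - xhalf t)‖ + pR * M / Kf * r t ^ (q+2) := h2
      _ ≤ L / Kf * r t ^ (q+2) + pR * M / Kf * r t ^ (q+2) := by linarith
      _ = (pR * M + L) / Kf * r t ^ (q+2) := by ring
  -- strong convexity consequences
  have hxs0 : fderiv ℝ A xs = 0 := by
    have hlmin : IsLocalMin A xs :=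
      Filter.Eventually.of_forall (fun y => isMinOn_iff.mp hmin y (Set.mem_univ y))
    exact hlmin.fderiv_eq_zero
  have lower2 : ∀ w : EuclideanSpace ℝ (Fin d),
      1 / lam * ‖w - xs‖ ^ 2 ≤ ⟪gradient A w, w - xs⟫ := by
    intro w
    have h1 := strongConvexOn_lower_bound hsc hAdf w xs
    have h2 := strongConvexOn_lower_bound hsc hAdf xs w
    rw [hxs0] at h2
    simp only [ContinuousLinearMap.zero_apply, add_zero] at h2
    have h3 : fderiv ℝ A w (xs - w) = -(fderiv ℝ A w (w - xs)) := by
      rw [← map_neg]; congr 1; abel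
    have h4 : ‖xs - w‖ = ‖w - xs‖ := norm_sub_rev _ _
    rw [h3, h4] at h1
    rw [← hginner]
    linarith
  have glower : ∀ w : EuclideanSpace ℝ (Fin d), lam⁻¹ * ‖w - xs‖ ≤ ‖gradient A w‖ := by
    intro w
    rcases eq_or_lt_of_le (norm_nonneg (w - xs)) with h0 | hpos
    · rw [← h0, mul_zero]; exact norm_nonneg _
    · have h5 := lower2 w
      have h6 : ⟪gradient A w, w - xs⟫ ≤ ‖gradient A w‖ * ‖w - xs‖ := real_inner_le_norm _ _
      have h7 : 1 / lam * ‖w - xs‖ ^ 2 ≤ ‖gradient A w‖ * ‖w - xs‖ := le_trans h5 h6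
      have h8 : 1 / lam = lam⁻¹ := one_div lam
      nlinarith
  have gnonneg : ∀ w : EuclideanSpace ℝ (Fin d), 0 ≤ ⟪gradient A w, w - xs⟫ := by
    intro w
    refine le_trans ?_ (lower2 w)
    positivity
  -- positivity of step sizes along non-stopped iterations
  have rpos : ∀ t, t + 1 < Tk → 0 < r t := by
    intro t ht
    rcases eq_or_lt_of_le (hrnn t) with h0 | hpos
    · exfalso
      have hwx : xhalf t - x t = 0 := by
        rw [← norm_eq_zero (a := xhalf t - x t)]
        rw [hrdef] at h0
        exact h0.symm
      have hxw : x t - xhalf t = 0 := by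
        have : x t - xhalf t = -(xhalf t - x t) := by abel
        rw [this, hwx, neg_zero]
      have h1 := key t
      rw [hxw, smul_zero, sub_zero] at h1
      have h2 : r t ^ (q+2) = 0 := by
        rw [← h0]
        simp [zero_pow]
      rw [h2, mul_zero] at h1
      have h3 : g t = 0 := by
        rwa [norm_le_zero_iff] at h1
      apply hnotstop t ht
      rw [hgdef] at h3
      simp only at h3
      rw [h3, norm_zero]
      positivity
    · exact hpos
  -- lower bound on gradient norm before stopping
  set D : ℝ := ‖x 0 - xs‖ with hD
  have glb : ∀ t, t + 1 < Tk → σ / (lam * (1 + σ)) * D ≤ ‖g t‖ := by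
    intro t ht
    have h1 : σ * lam⁻¹ * ‖xhalf t - x 0‖ < ‖g t‖ := by
      have := hnotstop t ht
      rw [hgdef]
      simp only
      exact lt_of_not_ge this
    have h2 : lam⁻¹ * ‖xhalf t - xs‖ ≤ ‖g t‖ := glower (xhalf t)
    have h3 : D ≤ ‖xhalf t - x 0‖ + ‖xhalf t - xs‖ := by
      rw [hD]
      calc ‖x 0 - xs‖ ≤ ‖x 0 - xhalf t‖ + ‖xhalf t - xs‖ := norm_sub_le_norm_sub_add_norm_sub _ _ _
        _ = ‖xhalf t - x 0‖ + ‖xhalf t - xs‖ := by rw [norm_sub_rev]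
    have h4 : ‖xhalf t - x 0‖ ≤ lam / σ * ‖g t‖ := by
      rcases le_or_gt ‖xhalf t - x 0‖ (lam / σ * ‖g t‖) with h | h
      · exact h
      · exfalso
        have : σ * lam⁻¹ * (lam / σ * ‖g t‖) < σ * lam⁻¹ * ‖xhalf t - x 0‖ := by
          apply mul_lt_mul_of_pos_left h (by positivity)
        have heq : σ * lam⁻¹ * (lam / σ * ‖g t‖) = ‖g t‖ := by field_simp
        rw [heq] at this
        linarith
    have h5 : ‖xhalf t - xs‖ ≤ lam * ‖g t‖ := by
      have := h2
      have hlam' : lam⁻¹ * ‖xhalf t - xs‖ ≤ ‖g t‖ := this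
      calc ‖xhalf t - xs‖ = lam * (lam⁻¹ * ‖xhalf t - xs‖) := by field_simp
        _ ≤ lam * ‖g t‖ := by apply mul_le_mul_of_nonneg_left hlam' hlam.le
    have h6 : D ≤ lam * (1 + σ) / σ * ‖g t‖ := by
      calc D ≤ ‖xhalf t - x 0‖ + ‖xhalf t - xs‖ := h3
        _ ≤ lam / σ * ‖g t‖ + lam * ‖g t‖ := by linarith
        _ = lam * (1 + σ) / σ * ‖g t‖ := by field_simp
    calc σ / (lam * (1 + σ)) * D ≤ σ / (lam * (1 + σ)) * (lam * (1 + σ) / σ * ‖g t‖) := by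
          apply mul_le_mul_of_nonneg_left h6 (by positivity)
      _ = ‖g t‖ := by field_simp
  -- per-step descent
  set cst : ℝ := 1 - (L / (pR * M)) ^ 2 with hcst
  have hcst0 : 0 < cst := by
    rw [hcst]
    have hq1 : L / (pR * M) < 1 := by
      rw [div_lt_one hpM]
      nlinarith
    have hq0 : 0 ≤ L / (pR * M) := by positivity
    nlinarith
  have step : ∀ t, t + 1 < Tk →
      cst * r t ^ 2 ≤ ‖x t - xs‖ ^ 2 - ‖x (t+1) - xs‖ ^ 2 := by
    intro t ht
    have hr := rpos t ht
    set c0 : ℝ := M / (Nat.factorial (q+1) : ℝ) * r t ^ (q+1) with hc0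
    have hc0pos : 0 < c0 := by
      rw [hc0]
      have : (0:ℝ) < (Nat.factorial (q+1) : ℝ) := by exact_mod_cast Nat.factorial_pos _
      positivity
    have hc0c1 : c0 = c1 t := by
      rw [hc0, hc1def]
      simp only
      have hfs : Kf = pR * (Nat.factorial (q+1) : ℝ) := by
        rw [hKf, hpR]
        exact_mod_cast congrArg (Nat.cast (R := ℝ)) (Nat.factorial_succ (q+1))
      rw [hfs]
      have h1 : (Nat.factorial (q+1) : ℝ) ≠ 0 := by
        exact_mod_cast Nat.factorial_ne_zero (q+1)
      field_simp
    have hstept : x (t+1) = x t - c0⁻¹ • g t := by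
      have := hstep t
      have hexp : q + 2 - 1 = q + 1 := by omega
      rw [hexp] at this
      exact this
    set e : EuclideanSpace ℝ (Fin d) := g t - c1 t • (x t - xhalf t) with he
    have hebound : ‖e‖ ≤ L / Kf * r t ^ (q+2) := key t
    have hwx1 : xhalf t - x (t+1) = c0⁻¹ • e := by
      rw [hstept, he, smul_sub, smul_smul, hc0c1, inv_mul_cancel₀ (hc0c1 ▸ hc0pos).ne',
        one_smul]
      abel
    have hwx1n : ‖xhalf t - x (t+1)‖ ≤ L / (pR * M) * r t := by
      rw [hwx1, norm_smul, Real.norm_eq_abs, abs_of_nonneg (by positivity)]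
      have h1 : c0⁻¹ * ‖e‖ ≤ c0⁻¹ * (L / Kf * r t ^ (q+2)) := by
        apply mul_le_mul_of_nonneg_left hebound (by positivity)
      have h2 : c0⁻¹ * (L / Kf * r t ^ (q+2)) = L / (pR * M) * r t := by
        rw [hc0c1, hc1def]
        simp only
        have hrne : r t ≠ 0 := hr.ne'
        rw [pow_succ]
        field_simp
        ring
      linarith
    have hmsd := ms_descent (xx := x t) (u := xs) (w := xhalf t) (g := g t)
      (η := c0⁻¹) (by positivity) hstept (gnonneg (xhalf t))
    have hsq : ‖xhalf t - x (t+1)‖ ^ 2 ≤ (L / (pR * M) * r t) ^ 2 := by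
      apply pow_le_pow_left₀ (norm_nonneg _) hwx1n
    have hrw : ‖xhalf t - x t‖ = r t := rfl
    rw [hrw] at hmsd
    have : (L / (pR * M) * r t) ^ 2 = (L / (pR * M)) ^ 2 * r t ^ 2 := by ring
    rw [this] at hsq
    rw [hcst]
    nlinarith
  -- telescoping
  have telescope : ∀ n, n < Tk →
      cst * ∑ t ∈ Finset.range n, r t ^ 2 ≤ D ^ 2 - ‖x n - xs‖ ^ 2 := by
    intro n
    induction n with
    | zero =>
      intro _
      simp [hD]
    | succ n IH =>
      intro hn
      have hIH := IH (by omega)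
      have hst := step n (by omega)
      rw [Finset.sum_range_succ, mul_add]
      linarith
  have main_ineq : cst * ∑ t ∈ Finset.range (Tk - 1), r t ^ 2 ≤ D ^ 2 := by
    have h1 := telescope (Tk - 1) (by omega)
    nlinarith [sq_nonneg ‖x (Tk - 1) - xs‖]
  -- case split on D
  have hq21 : q + 2 - 1 = q + 1 := by omega
  rw [hq21]
  have hDnn : (0:ℝ) ≤ D := hD ▸ norm_nonneg _
  rcases eq_or_lt_of_le hDnn with hD0 | hDpos
  · -- D = 0 : Tk = 1
    have hTk : Tk = 1 := by
      by_contra hne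
      have hTk2 : 2 ≤ Tk := by omega
      have h01 : 0 + 1 < Tk := by omega
      have hr0 := rpos 0 h01
      have h1 := telescope 1 (by omega)
      rw [Finset.sum_range_one] at h1
      have hD2 : D ^ 2 = 0 := by rw [← hD0]; ring
      nlinarith [mul_pos hcst0 (pow_pos hr0 2), sq_nonneg ‖x 1 - xs‖]
    have hD0' : D = 0 := hD0.symm
    rw [hTk, hD0', zero_pow (by omega : q + 1 ≠ 0), mul_zero,
      Real.zero_rpow (by positivity : (0:ℝ) < 2/pR).ne']
    norm_num
  · -- D > 0
    set β : ℝ := Kf * (σ / (lam * (1 + σ)) * D) / (pR * M + L) with hβ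
    have hβ0 : 0 < β := by rw [hβ]; positivity
    set ex : ℝ := (2 : ℝ) / pR with hex
    have hex0 : 0 < ex := by rw [hex]; positivity
    have hrlb : ∀ t, t + 1 < Tk → β ^ ex ≤ r t ^ 2 := by
      intro t ht
      have h1 := glb t ht
      have h2 := gub t
      have h3 : β ≤ r t ^ (q+2) := by
        rw [hβ]
        rw [div_le_iff₀ ha]
        have h4 : Kf * (σ / (lam * (1 + σ)) * D) ≤ Kf * ‖g t‖ := by
          apply mul_le_mul_of_nonneg_left h1 hKf0.le
        calc Kf * (σ / (lam * (1 + σ)) * D) ≤ Kf * ‖g t‖ := h4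
          _ ≤ Kf * ((pR * M + L) / Kf * r t ^ (q+2)) := by
              apply mul_le_mul_of_nonneg_left h2 hKf0.le
          _ = r t ^ (q+2) * (pR * M + L) := by field_simp
      calc β ^ ex ≤ (r t ^ (q+2)) ^ ex := Real.rpow_le_rpow hβ0.le h3 hex0.le
        _ = r t ^ 2 := by
            rw [hex, hpR]
            exact pow_rpow_cancel (r t) (hrnn t) (q+2) (by omega)
    set T1 : ℕ := Tk - 1 with hT1
    have hsum_lb : (T1 : ℝ) * β ^ ex ≤ ∑ t ∈ Finset.range T1, r t ^ 2 := by
      calc (T1 : ℝ) * β ^ ex = ∑ _t ∈ Finset.range T1, β ^ ex := by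
            rw [Finset.sum_const, Finset.card_range, nsmul_eq_mul]
        _ ≤ ∑ t ∈ Finset.range T1, r t ^ 2 := by
            apply Finset.sum_le_sum
            intro i hi
            apply hrlb
            have := Finset.mem_range.mp hi
            omega
    have hmain2 : cst * ((T1 : ℝ) * β ^ ex) ≤ D ^ 2 :=
      le_trans (mul_le_mul_of_nonneg_left hsum_lb hcst0.le) main_ineq
    -- the exact algebraic identity
    set X : ℝ := (lam * Cp * D ^ (q + 1)) ^ ex with hX
    have hCp0 : 0 < Cp := by
      rw [hCp]
      have h2 : (0:ℝ) < (pR * M - L) ^ (pR / 2) := Real.rpow_pos_of_pos hb _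
      have h3 : (0:ℝ) < (pR * M + L) ^ (pR / 2 - 1) := Real.rpow_pos_of_pos ha _
      have hσi : (0:ℝ) < 1 + σ⁻¹ := by
        have : (0:ℝ) < σ⁻¹ := inv_pos.mpr hσ0
        linarith
      exact div_pos (mul_pos (mul_pos (pow_pos hpR0 _) (pow_pos hM0 _)) hσi)
        (mul_pos (mul_pos hKf0 h2) h3)
    have hW0 : 0 ≤ lam * Cp * D ^ (q + 1) :=
      mul_nonneg (mul_nonneg hlam.le hCp0.le) (pow_nonneg hDnn _)
    have hident : cst * (X * β ^ ex) = D ^ 2 := by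
      rw [hX, ← Real.mul_rpow hW0 hβ0.le]
      have hZ : lam * Cp * D ^ (q + 1) * β =
          pR ^ (q+2) * M ^ (q+2) * D ^ (q+2) /
            ((pR * M - L) ^ (pR / 2) * (pR * M + L) ^ (pR / 2)) := by
        rw [hCp, hβ]
        have hsub : (pR * M + L) ^ (pR / 2 - 1) = (pR * M + L) ^ (pR / 2) / (pR * M + L) := by
          rw [Real.rpow_sub ha, Real.rpow_one]
        rw [hsub]
        have h2 : (0:ℝ) < (pR * M - L) ^ (pR / 2) := Real.rpow_pos_of_pos hb _
        have h3 : (0:ℝ) < (pR * M + L) ^ (pR / 2) := Real.rpow_pos_of_pos ha _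
        have h1σ : (0:ℝ) < 1 + σ := by linarith
        field_simp
        ring
      rw [hZ]
      have h2 : (0:ℝ) < (pR * M - L) ^ (pR / 2) := Real.rpow_pos_of_pos hb _
      have h3 : (0:ℝ) < (pR * M + L) ^ (pR / 2) := Real.rpow_pos_of_pos ha _
      rw [Real.div_rpow (by positivity) (by positivity)]
      rw [Real.mul_rpow (by positivity) (by positivity)]
      rw [Real.mul_rpow (by positivity) (by positivity)]
      rw [Real.mul_rpow h2.le h3.le]
      rw [hex]
      rw [pow_rpow_cancel pR hpR0.le (q+2) (by omega),
        pow_rpow_cancel M hM0.le (q+2) (by omega),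
        pow_rpow_cancel D (by positivity) (q+2) (by omega)]
      have hbe : ((pR * M - L) ^ (pR / 2)) ^ ((2:ℝ)/pR) = pR * M - L := by
        rw [← Real.rpow_mul hb.le]
        have : pR / 2 * (2 / pR) = 1 := by field_simp
        rw [hpR] at this ⊢
        rw [this, Real.rpow_one]
      have hae : ((pR * M + L) ^ (pR / 2)) ^ ((2:ℝ)/pR) = pR * M + L := by
        rw [← Real.rpow_mul ha.le]
        have : pR / 2 * (2 / pR) = 1 := by field_simp
        rw [hpR] at this ⊢
        rw [this, Real.rpow_one]
      rw [hpR] at hbe hae ⊢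
      rw [hbe, hae]
      rw [hcst]
      rw [← hpR]
      field_simp
      ring
    -- conclude
    have hβex : 0 < β ^ ex := Real.rpow_pos_of_pos hβ0 _
    have hT1X : (T1 : ℝ) ≤ X := by
      have h1 : cst * ((T1:ℝ) * β ^ ex) ≤ cst * (X * β ^ ex) := by rw [hident]; exact hmain2
      have h2 : (T1:ℝ) * β ^ ex ≤ X * β ^ ex := le_of_mul_le_mul_left h1 hcst0
      exact le_of_mul_le_mul_right h2 hβex
    have hcast : (T1 : ℝ) = (Tk : ℝ) - 1 := by
      rw [hT1, Nat.cast_sub hTk1, Nat.cast_one]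
    rw [hcast] at hT1X
    linarith
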